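/- arXiv:2404.09617 — 3 statements merged into one kernel-verified Lean document; each statement's English description precedes it below -/
import Mathlib

section
/- Let (x^k) be a proximal gradient sequence with stepsizes (γ_k) and let x* ∈ argmin φ. Then for every k ≥ 1: φ(x^k) − φ(x*) ≤ ⟨x^k − x*, (x^{k−1} − x^k)/γ_k − (∇f(x^{k−1}) − ∇f(x^k))⟩, and consequently φ(x^k) − φ(x*) ≤ ‖x^k − x*‖ ( ‖x^{k−1} − x^k‖/γ_k + ‖∇f(x^{k−1}) − ∇f(x^k)‖ ). -/
open scoped RealInnerProductSpace BigOperators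
open Filter

noncomputable section

/-- Euclidean space `ℝ^n`. -/
abbrev En (n : ℕ) : Type := EuclideanSpace ℝ (Fin n)

/-- Convexity for an extended-real-valued function. -/
def ERConvex {n : ℕ} (g : En n → EReal) : Prop :=
  ∀ x y : En n, ∀ a b : ℝ, 0 ≤ a → 0 ≤ b → a + b = 1 →
    g (a • x + b • y) ≤ (a : EReal) * g x + (b : EReal) * g y

/-- Properness for an extended-real-valued function: nowhere `⊥`, somewhere finite. -/
def ERProper {n : ℕ} (g : En n → EReal) : Prop :=
  (∀ x, g x ≠ ⊥) ∧ (∃ x, g x ≠ ⊤)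

/-- `p = prox_{γ g}(u)`: `p` minimizes `w ↦ g w + 1/(2γ)‖w − u‖²`. -/
def IsProx {n : ℕ} (g : En n → EReal) (γ : ℝ) (u p : En n) : Prop :=
  ∀ w : En n,
    g p + ((1 / (2 * γ) * ‖p - u‖ ^ 2 : ℝ) : EReal)
      ≤ g w + ((1 / (2 * γ) * ‖w - u‖ ^ 2 : ℝ) : EReal)

/-- The composite objective `φ = f + g`. -/
def phi {n : ℕ} (f : En n → ℝ) (g : En n → EReal) (z : En n) : EReal :=
  (f z : EReal) + g z

/-- `p` is a minimizer of `φ = f + g`. -/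
def IsArgmin {n : ℕ} (f : En n → ℝ) (g : En n → EReal) (p : En n) : Prop :=
  ∀ z : En n, phi f g p ≤ phi f g z

/-- `(x^k)` is a proximal gradient sequence with stepsizes `(γ_k)` and gradient `f'`. -/
def PGSeq {n : ℕ} (f' : En n → En n) (g : En n → EReal)
    (γ : ℕ → ℝ) (x : ℕ → En n) : Prop :=
  ∀ k : ℕ, IsProx g (γ (k + 1)) (x k - γ (k + 1) • f' (x k)) (x (k + 1))

/-- `s^k = x^k − x^{k−1}`. -/
def sk {n : ℕ} (x : ℕ → En n) (k : ℕ) : En n := x k - x (k - 1)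

/-- `y^k = ∇f(x^k) − ∇f(x^{k−1})`. -/
def yk {n : ℕ} (f' : En n → En n) (x : ℕ → En n) (k : ℕ) : En n :=
  f' (x k) - f' (x (k - 1))

/-- `ℓ_k = ⟨y^k, s^k⟩ / ‖s^k‖²`. -/
def ellk {n : ℕ} (f' : En n → En n) (x : ℕ → En n) (k : ℕ) : ℝ :=
  ⟪yk f' x k, sk x k⟫ / ‖sk x k‖ ^ 2

/-- `L_k = ‖y^k‖ / ‖s^k‖`. -/
def Lk {n : ℕ} (f' : En n → En n) (x : ℕ → En n) (k : ℕ) : ℝ :=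
  ‖yk f' x k‖ / ‖sk x k‖

/-- `c_k = ‖y^k‖² / ⟨y^k, s^k⟩`. -/
def ck {n : ℕ} (f' : En n → En n) (x : ℕ → En n) (k : ℕ) : ℝ :=
  ‖yk f' x k‖ ^ 2 / ⟪yk f' x k, sk x k⟫

/-- `P_k = φ(x^k) − min φ`, as a real number (`x*` a minimizer of `φ`). -/
def Pk {n : ℕ} (f : En n → ℝ) (g : En n → EReal) (xstar : En n)
    (x : ℕ → En n) (k : ℕ) : ℝ :=
  (phi f g (x k)).toReal - (phi f g xstar).toReal

/-- `P_k^min = min_{i ≤ k} P_i`. -/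
def PkMin {n : ℕ} (f : En n → ℝ) (g : En n → EReal) (xstar : En n)
    (x : ℕ → En n) (k : ℕ) : ℝ :=
  (Finset.range (k + 1)).inf' Finset.nonempty_range_add_one (Pk f g xstar x)

/-- `U_k^r(x*) = ½‖x^k − x*‖² + ½‖x^k − x^{k−1}‖² + γ_k (1 + r ρ_k) P_{k−1}`. -/
def Uk {n : ℕ} (f : En n → ℝ) (g : En n → EReal) (r : ℝ) (xstar : En n)
    (γ : ℕ → ℝ) (x : ℕ → En n) (k : ℕ) : ℝ :=
  1 / 2 * ‖x k - xstar‖ ^ 2 + 1 / 2 * ‖x k - x (k - 1)‖ ^ 2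
    + γ k * (1 + r * (γ k / γ (k - 1))) * Pk f g xstar x (k - 1)

/-- Property (p1): `1 + r ρ_k − r ρ_{k+1}² ≥ 0` for all `k ≥ 1`. -/
def P1 (γ : ℕ → ℝ) (r : ℝ) : Prop :=
  ∀ k : ℕ, 1 ≤ k →
    0 ≤ 1 + r * (γ k / γ (k - 1)) - r * (γ (k + 1) / γ k) ^ 2

/-- Property (p2): `1/2 − ρ_{k+1}² [γ_k² L_k² − (2−r) γ_k ℓ_k + 1 − r] ≥ 0` for all `k ≥ 1`. -/
def P2 {n : ℕ} (f' : En n → En n) (x : ℕ → En n) (γ : ℕ → ℝ) (r : ℝ) : Prop :=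
  ∀ k : ℕ, 1 ≤ k →
    0 ≤ 1 / 2 - (γ (k + 1) / γ k) ^ 2 *
      ((γ k) ^ 2 * (Lk f' x k) ^ 2 - (2 - r) * γ k * ellk f' x k + 1 - r)

/-- Property (p3): for every `k ≥ 1`, either `γ_{k+1} ≥ γ_k` or there is
`1 ≤ j ≤ k` with `min{γ_j, γ_{k+1}} ≥ λ_min ‖x^j − x^{j−1}‖^{1−ν}`. -/
def P3 {n : ℕ} (x : ℕ → En n) (γ : ℕ → ℝ) (ν lammin : ℝ) : Prop :=
  ∀ k : ℕ, 1 ≤ k →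
    γ k ≤ γ (k + 1) ∨
      ∃ j : ℕ, 1 ≤ j ∧ j ≤ k ∧
        lammin * ‖x j - x (j - 1)‖ ^ (1 - ν) ≤ min (γ j) (γ (k + 1))

/-- `L` is a `ν`-Hölder modulus for `f'` on `Ω`. -/
def HolderOn {n : ℕ} (f' : En n → En n) (ν L : ℝ) (Ω : Set (En n)) : Prop :=
  ∀ x ∈ Ω, ∀ y ∈ Ω, ‖f' x - f' y‖ ≤ L * ‖x - y‖ ^ ν

/-- `f'` is locally `ν`-Hölder continuous. -/
def LocallyHolder {n : ℕ} (f' : En n → En n) (ν : ℝ) : Prop :=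
  ∀ Ω : Set (En n), IsCompact Ω → Convex ℝ Ω → ∃ L > 0, HolderOn f' ν L Ω

/-- First term in the adaPG^{r,r/2} stepsize update. -/
def adaT1 (γ : ℕ → ℝ) (r : ℝ) (k : ℕ) : ℝ :=
  γ k * Real.sqrt (1 / r + γ k / γ (k - 1))

/-- The bracket `γ_k² L_k² − (2 − r) γ_k ℓ_k + 1 − r` in the adaPG^{r,r/2} update. -/
def adaBrk {n : ℕ} (f' : En n → En n) (x : ℕ → En n) (γ : ℕ → ℝ) (r : ℝ) (k : ℕ) : ℝ :=
  (γ k) ^ 2 * (Lk f' x k) ^ 2 - (2 - r) * γ k * ellk f' x k + 1 - r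

/-- The adaPG^{r,r/2} stepsize: the minimum of the two terms, the second
being `+∞` (inactive) when the bracket is nonpositive. -/
def adaSafe {n : ℕ} (f' : En n → En n) (x : ℕ → En n) (γ : ℕ → ℝ) (r : ℝ) (k : ℕ) : ℝ :=
  if 0 < adaBrk f' x γ r k then
    min (adaT1 γ r k) (γ k / Real.sqrt (2 * adaBrk f' x γ r k))
  else adaT1 γ r k

/-- The stepsizes are generated by the adaPG^{r,r/2} update (for `k ≥ 1`). -/
def AdaPGUpdate {n : ℕ} (f' : En n → En n) (x : ℕ → En n) (γ : ℕ → ℝ) (r : ℝ) : Prop :=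
  ∀ k : ℕ, 1 ≤ k → γ (k + 1) = adaSafe f' x γ r k

/-- `λ_k = γ_k / ‖x^k − x^{k−1}‖^{1−ν}`. -/
def lamk {n : ℕ} (x : ℕ → En n) (γ : ℕ → ℝ) (ν : ℝ) (k : ℕ) : ℝ :=
  γ k / ‖x k - x (k - 1)‖ ^ (1 - ν)

lemma grad_convex_ineq {n : ℕ} {f : En n → ℝ} {f' : En n → En n}
    (hfconv : ConvexOn ℝ Set.univ f)
    (hf' : ∀ z, HasGradientAt f (f' z) z) (p w : En n) :
    f p + ⟪f' p, w - p⟫ ≤ f w := by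
  set v : En n := w - p with hv
  have hc : ∀ t : ℝ, HasDerivAt (fun t : ℝ => p + t • v) v t := by
    intro t
    simpa using ((hasDerivAt_id t).smul_const v).const_add p
  have hq : HasDerivAt (fun t : ℝ => f (p + t • v)) ⟪f' p, v⟫ 0 := by
    have h1 : HasFDerivAt f ((InnerProductSpace.toDual ℝ (En n)) (f' p)) (p + (0:ℝ) • v) := by
      simpa using (hf' p).hasFDerivAt
    have h2 := h1.comp_hasDerivAt 0 (hc 0)
    exact h2
  have hslope : Filter.Tendsto (slope (fun t : ℝ => f (p + t • v)) 0)
      (nhdsWithin (0:ℝ) (Set.Ioi 0)) (nhds ⟪f' p, v⟫) := by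
    have := hasDerivAt_iff_tendsto_slope.mp hq
    exact this.mono_left (nhdsWithin_mono _ (by intro t ht; exact ne_of_gt ht))
  have hev : ∀ᶠ t in nhdsWithin (0:ℝ) (Set.Ioi 0),
      slope (fun t : ℝ => f (p + t • v)) 0 t ≤ f w - f p := by
    filter_upwards [Ioc_mem_nhdsGT_of_mem (by norm_num : (0:ℝ) ∈ Set.Ico (0:ℝ) 1)] with t ht
    have ht0 : 0 < t := ht.1
    have ht1 : t ≤ 1 := ht.2
    have hconv := hfconv.2 (Set.mem_univ p) (Set.mem_univ w) (by linarith : (0:ℝ) ≤ 1 - t)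
      (le_of_lt ht0) (by ring)
    have heq : (1 - t) • p + t • w = p + t • v := by
      rw [hv]; module
    rw [heq] at hconv
    rw [slope_def_field]
    have : (f (p + t • v) - f p) / t ≤ f w - f p := by
      rw [div_le_iff₀ ht0]
      simp only [smul_eq_mul] at hconv; nlinarith [hconv]
    simpa [div_eq_inv_mul] using this
  have := le_of_tendsto hslope hev
  linarith [real_inner_comm (f' p) v, this]

lemma prox_subgrad {n : ℕ} {g : En n → EReal} {γ : ℝ} {u p w : En n} {gp gw : ℝ}
    (hγ : 0 < γ) (hgconv : ERConvex g) (hprox : IsProx g γ u p)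
    (hgp : g p = (gp : EReal)) (hgw : g w = (gw : EReal)) :
    gp - gw ≤ γ⁻¹ * ⟪p - u, w - p⟫ := by
  set c : ℝ := 1 / (2 * γ) with hc
  have hcpos : 0 < c := by positivity
  set A : ℝ := ⟪p - u, w - p⟫ with hA
  set B : ℝ := ‖w - p‖ ^ 2 with hB
  have hBnn : 0 ≤ B := by positivity
  have key : ∀ t : ℝ, 0 < t → t ≤ 1 → gp - gw ≤ 2 * c * A + c * t * B := by
    intro t ht0 ht1
    set wt : En n := p + t • (w - p) with hwt
    have hconv : g wt ≤ (((1 - t) * gp + t * gw : ℝ) : EReal) := by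
      have := hgconv p w (1 - t) t (by linarith) (le_of_lt ht0) (by ring)
      have heq : (1 - t) • p + t • w = wt := by rw [hwt]; module
      rw [heq, hgp, hgw] at this
      calc g wt ≤ ((1 - t : ℝ) : EReal) * (gp : EReal) + (t : EReal) * (gw : EReal) := this
        _ = (((1 - t) * gp + t * gw : ℝ) : EReal) := by
            rw [← EReal.coe_mul, ← EReal.coe_mul, ← EReal.coe_add]
    have hpx := hprox wt
    rw [hgp] at hpx
    have hchain : ((gp + c * ‖p - u‖ ^ 2 : ℝ) : EReal)
        ≤ (((1 - t) * gp + t * gw + c * ‖wt - u‖ ^ 2 : ℝ) : EReal) := by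
      calc ((gp + c * ‖p - u‖ ^ 2 : ℝ) : EReal)
          = (gp : EReal) + ((c * ‖p - u‖ ^ 2 : ℝ) : EReal) := by
            rw [← EReal.coe_add]
        _ ≤ g wt + ((c * ‖wt - u‖ ^ 2 : ℝ) : EReal) := by
            simpa [hc] using hpx
        _ ≤ (((1 - t) * gp + t * gw : ℝ) : EReal) + ((c * ‖wt - u‖ ^ 2 : ℝ) : EReal) := by
            exact add_le_add_left hconv _
        _ = (((1 - t) * gp + t * gw + c * ‖wt - u‖ ^ 2 : ℝ) : EReal) := by
            rw [← EReal.coe_add]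
    have hreal : gp + c * ‖p - u‖ ^ 2 ≤ (1 - t) * gp + t * gw + c * ‖wt - u‖ ^ 2 :=
      EReal.coe_le_coe_iff.mp hchain
    have hnorm : ‖wt - u‖ ^ 2 = ‖p - u‖ ^ 2 + 2 * (t * A) + t ^ 2 * B := by
      have h1 : wt - u = (p - u) + t • (w - p) := by rw [hwt]; abel
      rw [h1, norm_add_sq_real, real_inner_smul_right, norm_smul]
      simp [abs_of_pos ht0, hA, hB]
      ring
    rw [hnorm] at hreal
    have ht : t * (gp - gw) ≤ t * (2 * c * A + c * t * B) := by nlinarith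
    exact le_of_mul_le_mul_left (by linarith [ht]) ht0
  have htend : Filter.Tendsto (fun t : ℝ => 2 * c * A + c * t * B)
      (nhdsWithin (0:ℝ) (Set.Ioi 0)) (nhds (2 * c * A)) := by
    have : Filter.Tendsto (fun t : ℝ => 2 * c * A + c * t * B) (nhds (0:ℝ))
        (nhds (2 * c * A + c * 0 * B)) := by
      exact tendsto_const_nhds.add (((continuous_const.mul continuous_id).mul
        continuous_const).tendsto 0)
    simpa using this.mono_left nhdsWithin_le_nhds
  have hev : ∀ᶠ t in nhdsWithin (0:ℝ) (Set.Ioi 0), gp - gw ≤ 2 * c * A + c * t * B := by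
    filter_upwards [Ioc_mem_nhdsGT_of_mem (by norm_num : (0:ℝ) ∈ Set.Ico (0:ℝ) 1)] with t htm
    exact key t htm.1 htm.2
  have hlim : gp - gw ≤ 2 * c * A := ge_of_tendsto htend hev
  have h2c : 2 * c = γ⁻¹ := by
    rw [hc]; field_simp
  linarith [hlim, h2c ▸ hlim]

/-- the fixed-point-residual bound on the optimality gap. -/
theorem statement_9 {n : ℕ} (f : En n → ℝ) (f' : En n → En n) (g : En n → EReal)
    (hfconv : ConvexOn ℝ Set.univ f)
    (hf' : ∀ z, HasGradientAt f (f' z) z)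
    (hgproper : ERProper g) (hglsc : LowerSemicontinuous g) (hgconv : ERConvex g)
    (γ : ℕ → ℝ) (hγ : ∀ k, 0 < γ k)
    (x : ℕ → En n) (hx : PGSeq f' g γ x)
    (xstar : En n) (hstar : IsArgmin f g xstar) :
    ∀ k : ℕ, 1 ≤ k →
      Pk f g xstar x k ≤
        ⟪x k - xstar, (γ k)⁻¹ • (x (k - 1) - x k) - (f' (x (k - 1)) - f' (x k))⟫ ∧
      Pk f g xstar x k ≤
        ‖x k - xstar‖ * (‖x (k - 1) - x k‖ / γ k + ‖f' (x (k - 1)) - f' (x k)‖) := by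
  intro k hk
  have hkpos : 0 < k := hk
  have hγk := hγ k
  have hγne : γ k ≠ 0 := ne_of_gt hγk
  have hprox : IsProx g (γ k) (x (k-1) - γ k • f' (x (k-1))) (x k) := by
    have h := hx (k-1)
    rwa [Nat.sub_add_cancel hk] at h
  obtain ⟨hbot, z0, hz0⟩ := hgproper
  set p : En n := x k with hp
  set u : En n := x (k-1) - γ k • f' (x (k-1)) with hu
  obtain ⟨gz, hgz⟩ : ∃ r : ℝ, g z0 = (r : EReal) :=
    ⟨(g z0).toReal, (EReal.coe_toReal hz0 (hbot z0)).symm⟩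
  have hgp_top : g p ≠ ⊤ := by
    intro htop
    have h := hprox z0
    rw [htop, hgz, ← EReal.coe_add, EReal.top_add_coe] at h
    exact (EReal.coe_lt_top _).not_ge h
  obtain ⟨gp, hgp⟩ : ∃ r : ℝ, g p = (r : EReal) :=
    ⟨(g p).toReal, (EReal.coe_toReal hgp_top (hbot p)).symm⟩
  have hphip : phi f g p = ((f p + gp : ℝ) : EReal) := by
    rw [phi, hgp, ← EReal.coe_add]
  have hphis_le := hstar p
  rw [hphip] at hphis_le
  have hgs_top : g xstar ≠ ⊤ := by
    intro htop
    rw [phi, htop, EReal.add_top_of_ne_bot (EReal.coe_ne_bot _), top_le_iff] at hphis_le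
    exact EReal.coe_ne_top _ hphis_le
  obtain ⟨gs, hgs⟩ : ∃ r : ℝ, g xstar = (r : EReal) :=
    ⟨(g xstar).toReal, (EReal.coe_toReal hgs_top (hbot xstar)).symm⟩
  have hPk : Pk f g xstar x k = (f p + gp) - (f xstar + gs) := by
    rw [Pk, phi, phi, hgp, hgs, ← EReal.coe_add, ← EReal.coe_add,
      EReal.toReal_coe, EReal.toReal_coe]
  have h1 : gp - gs ≤ (γ k)⁻¹ * ⟪p - u, xstar - p⟫ :=
    prox_subgrad hγk hgconv hprox hgp hgs
  have h2 : f p + ⟪f' p, xstar - p⟫ ≤ f xstar :=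
    grad_convex_ineq hfconv hf' p xstar
  have hT : ⟪p - xstar, (γ k)⁻¹ • (x (k-1) - p) - (f' (x (k-1)) - f' p)⟫
      = (γ k)⁻¹ * ⟪p - u, xstar - p⟫ - ⟪f' p, xstar - p⟫ := by
    have hu' : p - u = (p - x (k-1)) + γ k • f' (x (k-1)) := by
      rw [hu]; module
    rw [hu']
    simp only [inner_sub_left, inner_sub_right, inner_add_left, inner_add_right,
      real_inner_smul_left, real_inner_smul_right]
    rw [real_inner_comm p (x (k-1)), real_inner_comm p xstar,
      real_inner_comm (x (k-1)) xstar, real_inner_comm (f' (x (k-1))) xstar,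
      real_inner_comm (f' (x (k-1))) p, real_inner_comm (f' p) xstar,
      real_inner_comm (f' p) p]
    field_simp
    ring
  have goal1 : Pk f g xstar x k ≤
      ⟪p - xstar, (γ k)⁻¹ • (x (k-1) - p) - (f' (x (k-1)) - f' p)⟫ := by
    rw [hPk, hT]; linarith
  refine ⟨goal1, ?_⟩
  have hCS := real_inner_le_norm (p - xstar)
    ((γ k)⁻¹ • (x (k-1) - p) - (f' (x (k-1)) - f' p))
  have hV : ‖(γ k)⁻¹ • (x (k-1) - p) - (f' (x (k-1)) - f' p)‖
      ≤ ‖x (k-1) - p‖ / γ k + ‖f' (x (k-1)) - f' p‖ := by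
    refine le_trans (norm_sub_le _ _) ?_
    have : ‖(γ k)⁻¹ • (x (k-1) - p)‖ = ‖x (k-1) - p‖ / γ k := by
      rw [norm_smul, Real.norm_eq_abs, abs_of_pos (inv_pos.mpr hγk)]
      rw [div_eq_inv_mul]
    rw [this]
  calc Pk f g xstar x k
      ≤ ⟪p - xstar, (γ k)⁻¹ • (x (k-1) - p) - (f' (x (k-1)) - f' p)⟫ := goal1
    _ ≤ ‖p - xstar‖ * ‖(γ k)⁻¹ • (x (k-1) - p) - (f' (x (k-1)) - f' p)‖ := hCS
    _ ≤ ‖p - xstar‖ * (‖x (k-1) - p‖ / γ k + ‖f' (x (k-1)) - f' p‖) :=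
        mul_le_mul_of_nonneg_left hV (norm_nonneg _)

end
end

section
/- Suppose ∇f is globally Lipschitz continuous with constant L_f > 0, and let (x^k) be a proximal gradient sequence whose stepsizes are generated by the adaPG^{r,r/2} update with r = 1, i.e. γ_{k+1} = min{ γ_k √(1 + γ_k/γ_{k−1}), γ_k / √(2 [γ_k² L_k² − γ_k ℓ_k]_+) }. Then for every k ≥ 1, γ_{k+1} ≥ min{ γ_k, 1/(√2 L_f) }; consequently γ_k ≥ min{ γ_1, 1/(√2 L_f) } for all k ≥ 1. -/
open scoped RealInnerProductSpace BigOperators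
open Filter

noncomputable section

/-- Gradient monotonicity for a convex differentiable function. -/
lemma grad_mono' {n : ℕ} {f : En n → ℝ} {f' : En n → En n}
    (hconv : ConvexOn ℝ Set.univ f) (hf' : ∀ z, HasGradientAt f (f' z) z)
    (a b : En n) : 0 ≤ ⟪f' b - f' a, b - a⟫ := by
  set c : ℝ → En n := fun t => a + t • (b - a) with hc
  have hcd : ∀ t : ℝ, HasDerivAt c (b - a) t := by
    intro t
    simpa [hc] using (((hasDerivAt_id t).smul_const (b - a)).const_add a)
  have hh : ∀ t : ℝ, HasDerivAt (f ∘ c) ⟪f' (c t), b - a⟫ t := by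
    intro t
    exact ((hf' (c t)).hasFDerivAt).comp_hasDerivAt t (hcd t)
  have hconv' : ConvexOn ℝ Set.univ (f ∘ c) := by
    have heq : c = ⇑(AffineMap.lineMap a b) := by
      funext t; simp [hc, AffineMap.lineMap_apply]; module
    have := hconv.comp_affineMap (AffineMap.lineMap a b)
    rw [show (f ∘ fun t : ℝ => a + t • (b - a)) = f ∘ ⇑(AffineMap.lineMap a b) by
      rw [← hc, heq]]
    simpa using this
  have h0 : ⟪f' (c 0), b - a⟫ ≤ slope (f ∘ c) 0 1 :=
    hconv'.le_slope_of_hasDerivAt (Set.mem_univ 0) (Set.mem_univ 1) one_pos (hh 0)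
  have h1 : slope (f ∘ c) 0 1 ≤ ⟪f' (c 1), b - a⟫ :=
    hconv'.slope_le_of_hasDerivAt (Set.mem_univ 0) (Set.mem_univ 1) one_pos (hh 1)
  have : ⟪f' a, b - a⟫ ≤ ⟪f' b, b - a⟫ := by
    have := h0.trans h1
    simpa [hc] using this
  simpa [inner_sub_left] using sub_nonneg.mpr this

/-- with globally `L_f`-Lipschitz `∇f` and the adaPG^{1,1/2} update,
`γ_{k+1} ≥ min{γ_k, 1/(√2 L_f)}`, hence `γ_k ≥ min{γ_1, 1/(√2 L_f)}` for all `k ≥ 1`. -/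
theorem statement_13 {n : ℕ} (f : En n → ℝ) (f' : En n → En n) (g : En n → EReal)
    (hfconv : ConvexOn ℝ Set.univ f)
    (hf' : ∀ z, HasGradientAt f (f' z) z)
    (hgproper : ERProper g) (hglsc : LowerSemicontinuous g) (hgconv : ERConvex g)
    (hargmin : ∃ p, IsArgmin f g p)
    (Lf : ℝ) (hLf : 0 < Lf)
    (hLip : ∀ a b : En n, ‖f' a - f' b‖ ≤ Lf * ‖a - b‖)
    (γ : ℕ → ℝ) (hγ : ∀ k, 0 < γ k)
    (x : ℕ → En n) (hx : PGSeq f' g γ x)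
    (hxne : ∀ k : ℕ, 1 ≤ k → x k ≠ x (k - 1))
    (hupd : AdaPGUpdate f' x γ 1) :
    (∀ k : ℕ, 1 ≤ k → min (γ k) (1 / (Real.sqrt 2 * Lf)) ≤ γ (k + 1)) ∧
      ∀ k : ℕ, 1 ≤ k → min (γ 1) (1 / (Real.sqrt 2 * Lf)) ≤ γ k := by
  set cst : ℝ := 1 / (Real.sqrt 2 * Lf) with hcst
  have h2 : (0:ℝ) < Real.sqrt 2 := by positivity
  have main : ∀ k : ℕ, 1 ≤ k → min (γ k) cst ≤ γ (k + 1) := by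
    intro k hk
    have hs : x k - x (k - 1) ≠ 0 := sub_ne_zero.mpr (hxne k hk)
    have hsn : (0:ℝ) < ‖x k - x (k - 1)‖ := norm_pos_iff.mpr hs
    have hell : 0 ≤ ellk f' x k := by
      have := grad_mono' hfconv hf' (x (k - 1)) (x k)
      unfold ellk yk sk
      positivity
    have hLk0 : 0 ≤ Lk f' x k := by unfold Lk; positivity
    have hLkLf : Lk f' x k ≤ Lf := by
      unfold Lk yk sk
      rw [div_le_iff₀ hsn]
      simpa [sk] using hLip (x k) (x (k - 1))
    have hγk := hγ k
    have hbrk : adaBrk f' x γ 1 k ≤ (γ k) ^ 2 * Lf ^ 2 := by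
      unfold adaBrk
      have h1 : (γ k) ^ 2 * (Lk f' x k) ^ 2 ≤ (γ k) ^ 2 * Lf ^ 2 :=
        mul_le_mul_of_nonneg_left (pow_le_pow_left₀ hLk0 hLkLf 2) (sq_nonneg (γ k))
      have h2' : 0 ≤ γ k * ellk f' x k := mul_nonneg hγk.le hell
      nlinarith
    have hT1 : γ k ≤ adaT1 γ 1 k := by
      unfold adaT1
      have hone : (1:ℝ) ≤ Real.sqrt (1 / 1 + γ k / γ (k - 1)) := by
        rw [show (1:ℝ) = Real.sqrt 1 by simp]
        apply Real.sqrt_le_sqrt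
        have := div_pos (hγ k) (hγ (k - 1))
        simp only [Real.sqrt_one]
        nlinarith
      nlinarith
    rw [hupd k hk]
    unfold adaSafe
    by_cases hpos : 0 < adaBrk f' x γ 1 k
    · rw [if_pos hpos]
      refine le_min ((min_le_left _ _).trans hT1) ((min_le_right _ _).trans ?_)
      have hsq : Real.sqrt (2 * adaBrk f' x γ 1 k) ≤ Real.sqrt 2 * γ k * Lf := by
        have h1 : Real.sqrt (2 * adaBrk f' x γ 1 k)
            ≤ Real.sqrt (2 * ((γ k) ^ 2 * Lf ^ 2)) := by
          apply Real.sqrt_le_sqrt; nlinarith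
        have h2' : Real.sqrt (2 * ((γ k) ^ 2 * Lf ^ 2))
            = Real.sqrt 2 * γ k * Lf := by
          rw [show 2 * ((γ k) ^ 2 * Lf ^ 2) = (Real.sqrt 2 * γ k * Lf) ^ 2 by
            have : Real.sqrt 2 ^ 2 = 2 := Real.sq_sqrt (by norm_num)
            nlinarith]
          exact Real.sqrt_sq (by positivity)
        linarith
      have hsqpos : 0 < Real.sqrt (2 * adaBrk f' x γ 1 k) := by
        apply Real.sqrt_pos.mpr; linarith
      calc cst = γ k / (Real.sqrt 2 * γ k * Lf) := by
            rw [hcst]; field_simp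
        _ ≤ γ k / Real.sqrt (2 * adaBrk f' x γ 1 k) :=
            div_le_div_of_nonneg_left hγk.le hsqpos hsq
    · rw [if_neg hpos]
      exact (min_le_left _ _).trans hT1
  refine ⟨main, ?_⟩
  intro k hk
  induction k with
  | zero => omega
  | succ m ih =>
    rcases Nat.eq_or_lt_of_le hk with h | h
    · simp [← h]
    · have hm : 1 ≤ m := by omega
      calc min (γ 1) cst ≤ min (γ m) cst :=
            le_min ((ih hm).trans (le_refl _) |>.trans (le_refl _) |>.trans
              (le_of_eq rfl) |>.trans (le_refl _)) (min_le_right _ _)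
        _ ≤ γ (m + 1) := main m hm

end
end

section
/- Let (x^k) be a proximal gradient sequence whose stepsizes are generated by the short-BB-safeguarded update γ_{k+1} = min{ γ_k √(1 + γ_k/γ_{k−1}), γ_k / √(2 [γ_k² L_k² − γ_k ℓ_k]_+), 1/c_k }, and let k ≥ 1 be such that ⟨y^k, s^k⟩ > 0. Then at least one of the following holds: γ_{k+1} ≥ γ_k; or γ_k ≥ 2/c_k; or γ_k ≥ γ_{k+1} = 1/c_k. -/
open scoped RealInnerProductSpace BigOperators
open Filter

noncomputable section

/-- for the short-BB-safeguarded update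
`γ_{k+1} = min{γ^safe_{k+1}, 1/c_k}` (with `r = 1`), at any `k ≥ 1` with
`⟨y^k, s^k⟩ > 0`: either `γ_{k+1} ≥ γ_k`, or `γ_k ≥ 2/c_k`, or
`γ_k ≥ γ_{k+1} = 1/c_k`. -/
theorem statement_16 {n : ℕ} (f : En n → ℝ) (f' : En n → En n) (g : En n → EReal)
    (hfconv : ConvexOn ℝ Set.univ f)
    (hf' : ∀ z, HasGradientAt f (f' z) z)
    (hgproper : ERProper g) (hglsc : LowerSemicontinuous g) (hgconv : ERConvex g)
    (hargmin : ∃ p, IsArgmin f g p)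
    (γ : ℕ → ℝ) (hγ : ∀ k, 0 < γ k)
    (x : ℕ → En n) (hx : PGSeq f' g γ x)
    (hxne : ∀ k : ℕ, 1 ≤ k → x k ≠ x (k - 1))
    (hupd : ∀ k : ℕ, 1 ≤ k →
      γ (k + 1) = min (adaSafe f' x γ 1 k) (1 / ck f' x k))
    (k : ℕ) (hk : 1 ≤ k) (hys : 0 < ⟪yk f' x k, sk x k⟫) :
    γ k ≤ γ (k + 1) ∨ 2 / ck f' x k ≤ γ k ∨
      (γ (k + 1) ≤ γ k ∧ γ (k + 1) = 1 / ck f' x k) := by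
  have hs : sk x k ≠ 0 := sub_ne_zero.mpr (hxne k hk)
  have hsn : 0 < ‖sk x k‖ := norm_pos_iff.mpr hs
  have hy : yk f' x k ≠ 0 := by
    intro h; rw [h] at hys; simp at hys
  have hyn : 0 < ‖yk f' x k‖ := norm_pos_iff.mpr hy
  have ha : ⟪yk f' x k, sk x k⟫ ≠ 0 := hys.ne'
  have hsne : ‖sk x k‖ ≠ 0 := hsn.ne'
  set ℓ := ellk f' x k with hℓdef
  set c := ck f' x k with hcdef
  have hℓ : 0 < ℓ := div_pos hys (by positivity)
  have hc : 0 < c := div_pos (by positivity) hys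
  have key0 : ∀ a b c : ℝ, a ≠ 0 → b / c = a / c * (b / a) := by
    intro a b c ha0
    rcases eq_or_ne c 0 with rfl | hc0
    · simp
    · field_simp
  have hLc : (Lk f' x k)^2 = ℓ * c := by
    rw [hℓdef, hcdef]; unfold Lk ellk ck
    rw [div_pow]; exact key0 _ _ _ ha
  have hℓc : ℓ ≤ c := by
    have hcs : ⟪yk f' x k, sk x k⟫ ≤ ‖yk f' x k‖ * ‖sk x k‖ := real_inner_le_norm _ _
    rw [hℓdef, hcdef]; unfold ellk ck
    rw [div_le_div_iff₀ (by positivity) hys]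
    nlinarith [hys, hsn, hyn]
  by_cases h1 : γ k ≤ γ (k+1)
  · exact Or.inl h1
  push_neg at h1
  have hupk := hupd k hk
  by_cases h3 : γ (k+1) = 1 / c
  · exact Or.inr (Or.inr ⟨h1.le, h3⟩)
  have hsafe : adaSafe f' x γ 1 k < 1 / c := by
    by_contra h
    push_neg at h
    exact h3 (by rw [hupk, min_eq_right h])
  have hγk1 : γ (k+1) = adaSafe f' x γ 1 k := by rw [hupk, min_eq_left hsafe.le]
  have hT1 : γ k ≤ adaT1 γ 1 k := by
    have h01 : (1:ℝ) ≤ 1/1 + γ k / γ (k-1) := by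
      have : 0 < γ k / γ (k-1) := div_pos (hγ k) (hγ (k-1))
      linarith
    have h2 : (1:ℝ) ≤ Real.sqrt (1/1 + γ k / γ (k-1)) := by
      have := Real.sqrt_le_sqrt h01
      rwa [Real.sqrt_one] at this
    calc γ k = γ k * 1 := (mul_one _).symm
    _ ≤ adaT1 γ 1 k := mul_le_mul_of_nonneg_left h2 (hγ k).le
  have hB : adaBrk f' x γ 1 k = γ k * ℓ * (γ k * c - 1) := by
    unfold adaBrk; rw [hLc]; ring
  by_cases hBp : 0 < adaBrk f' x γ 1 k
  · have hAS : adaSafe f' x γ 1 k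
        = min (adaT1 γ 1 k) (γ k / Real.sqrt (2 * adaBrk f' x γ 1 k)) := by
      unfold adaSafe; rw [if_pos hBp]
    have hlt : adaSafe f' x γ 1 k < γ k := hγk1 ▸ h1
    have h2nd : γ k / Real.sqrt (2 * adaBrk f' x γ 1 k) < 1 / c := by
      rcases min_cases (adaT1 γ 1 k) (γ k / Real.sqrt (2 * adaBrk f' x γ 1 k)) with
        ⟨he, hle⟩ | ⟨he, hle⟩
      · exfalso; rw [hAS, he] at hlt; linarith
      · rw [hAS, he] at hsafe; exact hsafe
    have hsqB : 0 < Real.sqrt (2 * adaBrk f' x γ 1 k) := Real.sqrt_pos.mpr (by linarith)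
    rw [div_lt_div_iff₀ hsqB hc] at h2nd
    have hsq : (γ k * c)^2 < 2 * adaBrk f' x γ 1 k := by
      have h2 : γ k * c < Real.sqrt (2 * adaBrk f' x γ 1 k) := by linarith
      nlinarith [Real.sq_sqrt (by linarith : (0:ℝ) ≤ 2 * adaBrk f' x γ 1 k),
        Real.sqrt_nonneg (2 * adaBrk f' x γ 1 k), mul_pos (hγ k) hc]
    rw [hB] at hsq
    have hgc1 : 0 < γ k * c - 1 := by
      by_contra hcon
      push_neg at hcon
      have h5 : γ k * ℓ * (γ k * c - 1) ≤ 0 :=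
        mul_nonpos_of_nonneg_of_nonpos (mul_pos (hγ k) hℓ).le hcon
      have h6 : 0 < (γ k * c) ^ 2 := pow_pos (mul_pos (hγ k) hc) 2
      linarith
    have key : γ k * ℓ * (γ k * c - 1) ≤ γ k * c * (γ k * c - 1) :=
      mul_le_mul_of_nonneg_right (mul_le_mul_of_nonneg_left hℓc (hγ k).le) hgc1.le
    have hfin : 2 < γ k * c := by
      nlinarith [hsq, key, mul_pos (hγ k) hc]
    refine Or.inr (Or.inl ?_)
    rw [div_le_iff₀ hc]
    linarith
  · push_neg at hBp
    have hAS : adaSafe f' x γ 1 k = adaT1 γ 1 k := by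
      unfold adaSafe; rw [if_neg (not_lt.mpr hBp)]
    exfalso
    rw [hγk1, hAS] at h1
    linarith

end
end
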